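/- Let k be a field, A = k[x,y], and let α ∈ k with α ≠ 0 and α ≠ 1. Define the A-linear map φ : A^4 → A^2 by φ(e_1) = (y^3, 0), φ(e_2) = (0, x·y^2), φ(e_3) = (−x^2·y, x^2·y), φ(e_4) = (−x^3, α·x^3). Then the kernel of φ is exactly the A-submodule of A^4 generated by the two elements s_1 = (x^2, −x·y, y^2, 0) and s_2 = (0, (1−α)·x^2, −x·y, y^2). -/

import Mathlib

open MvPolynomial

noncomputable section

variable (k : Type) [Field k]

/-- `A = k[x,y]`. -/
abbrev A2 (k : Type) [Field k] := MvPolynomial (Fin 2) k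

/-- The map `φ : A⁴ → A²` with `φ(e₁) = (y³, 0)`, `φ(e₂) = (0, x·y²)`,
`φ(e₃) = (−x²·y, x²·y)`, `φ(e₄) = (−x³, α·x³)`. -/
def phiMatrix (α : k) : Matrix (Fin 2) (Fin 4) (A2 k) :=
  Matrix.of
    ![![(X 1)^3, 0, -((X 0)^2 * X 1), -(X 0)^3],
      ![0, X 0 * (X 1)^2, (X 0)^2 * X 1, C α * (X 0)^3]]

/-- `s₁ = (x², −x·y, y², 0)`. -/
def syz₁ : Fin 4 → A2 k := ![(X 0)^2, -(X 0 * X 1), (X 1)^2, 0]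

/-- `s₂ = (0, (1−α)·x², −x·y, y²)`. -/
def syz₂ (α : k) : Fin 4 → A2 k := ![0, (1 - C α) * (X 0)^2, -(X 0 * X 1), (X 1)^2]

/-- For `α ∈ k` with `α ≠ 0`, `α ≠ 1`, the kernel of the map `φ : A⁴ → A²` given by
`φ(e₁) = (y³,0)`, `φ(e₂) = (0,xy²)`, `φ(e₃) = (−x²y, x²y)`, `φ(e₄) = (−x³, α·x³)`
is exactly the submodule generated by `s₁ = (x², −xy, y², 0)` and
`s₂ = (0, (1−α)x², −xy, y²)`. -/
lemma primeX0 : Prime (X 0 : A2 k) := by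
  rw [← MulEquiv.prime_iff (MvPolynomial.finSuccEquiv k 1).toMulEquiv]
  have : (MvPolynomial.finSuccEquiv k 1).toMulEquiv (X 0 : A2 k) = Polynomial.X := by
    simpa using MvPolynomial.finSuccEquiv_X_zero (R := k) (n := 1)
  rw [this]; exact Polynomial.prime_X

lemma primeX1 : Prime (X 1 : A2 k) := by
  rw [← MulEquiv.prime_iff (MvPolynomial.renameEquiv k (Equiv.swap (0:Fin 2) 1)).toMulEquiv]
  have : (MvPolynomial.renameEquiv k (Equiv.swap (0:Fin 2) 1)).toMulEquiv (X 1 : A2 k) = X 0 := by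
    simp [MvPolynomial.renameEquiv_apply, MvPolynomial.rename_X]
  rw [this]; exact primeX0 k

theorem ker_phi_eq_span (α : k) (hα0 : α ≠ 0) (hα1 : α ≠ 1) :
    LinearMap.ker (Matrix.toLin' (phiMatrix k α)) =
      Submodule.span (A2 k) {syz₁ k, syz₂ k α} := by
  have hx := primeX0 k
  have hy := primeX1 k
  have hxy : ¬ (X 0 : A2 k) ∣ X 1 := by simp
  have hyx : ¬ (X 1 : A2 k) ∣ X 0 := by simp
  apply le_antisymm
  · intro v hv
    rw [LinearMap.mem_ker, Matrix.toLin'_apply] at hv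
    have h0 := congrFun hv 0
    have h1 := congrFun hv 1
    simp [phiMatrix, Matrix.mulVec, dotProduct, Fin.sum_univ_four] at h0 h1
    -- Step 1: x² ∣ v 0
    have hd1 : (X 0 : A2 k)^2 ∣ v 0 * (X 1)^3 := by
      refine ⟨X 1 * v 2 + X 0 * v 3, by linear_combination h0⟩
    have hnd : ¬ (X 0 : A2 k) ∣ (X 1)^3 := fun h => hxy (hx.dvd_of_dvd_pow h)
    obtain ⟨a1, ha⟩ := hx.pow_dvd_of_dvd_mul_right 2 hnd hd1
    -- cancel x²
    have e1 : a1 * (X 1:A2 k)^3 - X 1 * v 2 - X 0 * v 3 = 0 := by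
      have : (X 0:A2 k)^2 * (a1 * (X 1)^3 - X 1 * v 2 - X 0 * v 3) = 0 := by
        linear_combination h0 - (X 1:A2 k)^3 * ha
      exact (mul_eq_zero.mp this).resolve_left (pow_ne_zero _ (MvPolynomial.X_ne_zero 0))
    -- Step 2: y ∣ v 3
    have hd2 : (X 1 : A2 k) ∣ X 0 * v 3 := ⟨a1 * (X 1)^2 - v 2, by linear_combination -e1⟩
    obtain ⟨d1, hd⟩ := (hy.dvd_or_dvd hd2).resolve_left hyx
    -- Step 3: v 2 = a1 y² - x d1
    have e2 : v 2 = a1 * (X 1:A2 k)^2 - X 0 * d1 := by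
      have : (X 1:A2 k) * (a1 * (X 1)^2 - v 2 - X 0 * d1) = 0 := by
        linear_combination e1 + (X 0:A2 k) * hd
      have h := (mul_eq_zero.mp this).resolve_left (MvPolynomial.X_ne_zero 1)
      linear_combination -h
    -- Step 4
    have e3 : X 1 * v 1 + X 0 * (X 1:A2 k)^2 * a1 + (C α - 1) * (X 0)^2 * d1 = 0 := by
      have : (X 0:A2 k) * X 1 * (X 1 * v 1 + X 0 * (X 1)^2 * a1 + (C α - 1) * (X 0)^2 * d1) = 0 := by
        linear_combination h1 - ((X 0:A2 k)^2 * X 1) * e2 - (C α * (X 0:A2 k)^3) * hd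
      have h := (mul_eq_zero.mp this).resolve_left
        (mul_ne_zero (MvPolynomial.X_ne_zero 0) (MvPolynomial.X_ne_zero 1))
      linear_combination h
    -- Step 5: y ∣ d1
    have hu : IsUnit ((C α - 1 : A2 k)) := by
      rw [show (C α - 1 : A2 k) = C (α - 1) by rw [map_sub, map_one]]
      exact (isUnit_iff_ne_zero.mpr (sub_ne_zero.mpr hα1)).map (C : k →+* A2 k)
    have hd3 : (X 1 : A2 k) ∣ (C α - 1) * ((X 0)^2 * d1) :=
      ⟨-v 1 - X 0 * X 1 * a1, by linear_combination e3⟩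
    have hyd1 : (X 1 : A2 k) ∣ d1 := by
      rcases hy.dvd_or_dvd hd3 with h | h
      · exact absurd (isUnit_of_dvd_unit h hu) hy.not_unit
      · rcases hy.dvd_or_dvd h with h | h
        · exact absurd (hy.dvd_of_dvd_pow h) hyx
        · exact h
    obtain ⟨d2, hdd⟩ := hyd1
    -- Step 6
    have e4 : v 1 = -(X 0 * X 1) * a1 + (1 - C α) * (X 0:A2 k)^2 * d2 := by
      have : (X 1:A2 k) * (v 1 + X 0 * X 1 * a1 + (C α - 1) * (X 0)^2 * d2) = 0 := by
        linear_combination e3 - ((C α - 1) * (X 0:A2 k)^2) * hdd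
      have h := (mul_eq_zero.mp this).resolve_left (MvPolynomial.X_ne_zero 1)
      linear_combination h
    have hv3 : v 3 = (X 1:A2 k)^2 * d2 := by rw [hd, hdd]; ring
    have hv0 : v 0 = (X 0:A2 k)^2 * a1 := by
      have h3 : ((X 1:A2 k)^3) * (v 0 - (X 0)^2 * a1) = 0 := by linear_combination (X 1:A2 k)^3 * ha
      have := (mul_eq_zero.mp h3).resolve_left (pow_ne_zero _ (MvPolynomial.X_ne_zero 1))
      linear_combination this
    have : v = a1 • syz₁ k + d2 • syz₂ k α := by
      funext i
      fin_cases i <;>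
        simp [syz₁, syz₂, hv0, e2, e4, hv3, hd, hdd, smul_eq_mul] <;> ring
    rw [this]
    exact Submodule.add_mem _
      (Submodule.smul_mem _ _ (Submodule.subset_span (by left; rfl)))
      (Submodule.smul_mem _ _ (Submodule.subset_span (by right; rfl)))
  · rw [Submodule.span_le]
    rintro s hs
    simp only [Set.mem_insert_iff, Set.mem_singleton_iff] at hs
    have key : ∀ w ∈ ({syz₁ k, syz₂ k α} : Set (Fin 4 → A2 k)),
        Matrix.toLin' (phiMatrix k α) w = 0 := by
      rintro w (rfl | rfl) <;>
      · rw [Matrix.toLin'_apply]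
        funext i
        fin_cases i <;>
          simp [phiMatrix, syz₁, syz₂, Matrix.mulVec, dotProduct, Fin.sum_univ_four] <;>
          ring
    rcases hs with rfl | rfl
    · exact LinearMap.mem_ker.mpr (key _ (by left; rfl))
    · exact LinearMap.mem_ker.mpr (key _ (by right; rfl))


end
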